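/- For τ > 1, the function F_τ(x,y) = (sqrt(y₁² + y₂²) + τ(x₂y₁ − x₁y₂)) / (2(1 − x₁² − x₂²)) is strictly positive for all y ≠ 0 whenever x₁² + x₂² < 1/τ², and there exist x with 1/τ² < x₁² + x₂² < 1 and y ≠ 0 with F_τ(x,y) ≤ 0. -/

import Mathlib

theorem F_tau_large_tau (τ : ℝ) (hτ : 1 < τ) :
    (∀ x₁ x₂ : ℝ, x₁ ^ 2 + x₂ ^ 2 < 1 / τ ^ 2 →
      ∀ y₁ y₂ : ℝ, (y₁, y₂) ≠ (0, 0) →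
        0 < (Real.sqrt (y₁ ^ 2 + y₂ ^ 2) + τ * (x₂ * y₁ - x₁ * y₂)) /
            (2 * (1 - x₁ ^ 2 - x₂ ^ 2))) ∧
    (∃ x₁ x₂ y₁ y₂ : ℝ, 1 / τ ^ 2 < x₁ ^ 2 + x₂ ^ 2 ∧ x₁ ^ 2 + x₂ ^ 2 < 1 ∧
      (y₁, y₂) ≠ (0, 0) ∧
      (Real.sqrt (y₁ ^ 2 + y₂ ^ 2) + τ * (x₂ * y₁ - x₁ * y₂)) /
          (2 * (1 - x₁ ^ 2 - x₂ ^ 2)) ≤ 0) := by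
  have hτ0 : (0:ℝ) < τ := lt_trans one_pos hτ
  have hτ2 : (0:ℝ) < τ ^ 2 := by positivity
  constructor
  · intro x₁ x₂ hx y₁ y₂ hy
    have hy' : ¬(y₁ = 0 ∧ y₂ = 0) := by simpa [Prod.ext_iff] using hy
    have hy2 : 0 < y₁ ^ 2 + y₂ ^ 2 := by
      rcases eq_or_ne y₁ 0 with h1 | h1
      · have h2 : y₂ ≠ 0 := fun h2 => hy' ⟨h1, h2⟩
        positivity
      · positivity
    have hs : Real.sqrt (y₁ ^ 2 + y₂ ^ 2) ^ 2 = y₁ ^ 2 + y₂ ^ 2 :=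
      Real.sq_sqrt hy2.le
    have hs0 : 0 < Real.sqrt (y₁ ^ 2 + y₂ ^ 2) := Real.sqrt_pos.mpr hy2
    have hx' : τ ^ 2 * (x₁ ^ 2 + x₂ ^ 2) < 1 := by
      have := mul_lt_mul_of_pos_left hx hτ2
      rwa [mul_one_div, div_self (ne_of_gt hτ2)] at this
    have hden : 0 < 2 * (1 - x₁ ^ 2 - x₂ ^ 2) := by nlinarith
    apply div_pos _ hden
    have hCS : (x₂ * y₁ - x₁ * y₂) ^ 2 ≤ (x₁ ^ 2 + x₂ ^ 2) * (y₁ ^ 2 + y₂ ^ 2) := by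
      nlinarith [sq_nonneg (x₁ * y₁ + x₂ * y₂)]
    have h1 : τ ^ 2 * (x₂ * y₁ - x₁ * y₂) ^ 2 < Real.sqrt (y₁ ^ 2 + y₂ ^ 2) ^ 2 := by
      rw [hs]
      calc τ ^ 2 * (x₂ * y₁ - x₁ * y₂) ^ 2
          ≤ τ ^ 2 * ((x₁ ^ 2 + x₂ ^ 2) * (y₁ ^ 2 + y₂ ^ 2)) :=
            mul_le_mul_of_nonneg_left hCS hτ2.le
        _ = (τ ^ 2 * (x₁ ^ 2 + x₂ ^ 2)) * (y₁ ^ 2 + y₂ ^ 2) := by ring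
        _ < 1 * (y₁ ^ 2 + y₂ ^ 2) := mul_lt_mul_of_pos_right hx' hy2
        _ = y₁ ^ 2 + y₂ ^ 2 := one_mul _
    nlinarith [h1, hs0, sq_nonneg (Real.sqrt (y₁ ^ 2 + y₂ ^ 2) + τ * (x₂ * y₁ - x₁ * y₂))]
  · refine ⟨(1/τ + 1)/2, 0, 0, 1, ?_, ?_, by simp, ?_⟩
    · have h : 1/τ < (1/τ + 1)/2 := by
        rw [lt_div_iff₀ (by norm_num : (0:ℝ) < 2)]
        have : 1/τ < 1 := by rw [div_lt_one hτ0]; exact hτ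
        linarith
      have h0 : 0 < 1/τ := by positivity
      calc 1 / τ ^ 2 = (1/τ)^2 := by rw [div_pow, one_pow]
        _ < ((1/τ + 1)/2)^2 := by nlinarith
        _ = ((1/τ + 1)/2)^2 + 0^2 := by ring
    · have h : (1/τ + 1)/2 < 1 := by
        have : 1/τ < 1 := by rw [div_lt_one hτ0]; exact hτ
        linarith
      have h0 : 0 < (1/τ + 1)/2 := by positivity
      nlinarith
    · apply div_nonpos_of_nonpos_of_nonneg
      · have hs : Real.sqrt (0 ^ 2 + 1 ^ 2) = 1 := by norm_num
        rw [hs]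
        have : τ * ((1/τ + 1)/2) = (1 + τ)/2 := by field_simp
        nlinarith
      · have h : (1/τ + 1)/2 < 1 := by
          have : 1/τ < 1 := by rw [div_lt_one hτ0]; exact hτ
          linarith
        have h0 : 0 < (1/τ + 1)/2 := by positivity
        nlinarith
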